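/- Let c > 0, γ > 2, and let r > 0 be fixed. If f(t) = ρ'(t+r) √(ρ(r)) / (π ρ(t+r) √(ρ(t+r) − ρ(r))) with ρ(t) = c · t^γ, then ∫₀^∞ t f(t) dt < ∞; i.e., the random time S(r) with this density has finite expectation. -/

import Mathlib

open Real Filter Set MeasureTheory

theorem finite_expectation_of_power_time_change (c γ r : ℝ) (hc : 0 < c) (hγ : 2 < γ)
    (hr : 0 < r) :
    let ρ : ℝ → ℝ := fun t => c * t ^ γ
    let ρ' : ℝ → ℝ := fun t => c * γ * t ^ (γ - 1)
    let f : ℝ → ℝ := fun t =>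
      ρ' (t + r) * Real.sqrt (ρ r) / (π * ρ (t + r) * Real.sqrt (ρ (t + r) - ρ r))
    MeasureTheory.IntegrableOn (fun t => t * f t) (Set.Ioi 0) := by
  intro ρ ρ' f
  have hγ0 : (0:ℝ) < γ := by linarith
  have hγ1 : (0:ℝ) ≤ γ - 1 := by linarith
  have hπ : (0:ℝ) < π := Real.pi_pos
  set B := Real.sqrt (c * r ^ γ) with hBdef
  have hB0 : 0 ≤ B := Real.sqrt_nonneg _
  -- measurability
  have hm : Measurable (fun t => t * f t) := by
    have h1 : Measurable fun t : ℝ => (t + r) ^ (γ - 1) :=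
      ((Real.continuous_rpow_const hγ1).comp (continuous_id.add continuous_const)).measurable
    have h2 : Measurable fun t : ℝ => (t + r) ^ γ :=
      ((Real.continuous_rpow_const hγ0.le).comp (continuous_id.add continuous_const)).measurable
    apply measurable_id.mul
    apply Measurable.div
    · exact (h1.const_mul _).mul_const _
    · exact ((h2.const_mul _).const_mul _).mul ((h2.const_mul _).sub_const _).sqrt
  -- algebraic rewrite of t * f t
  have hrep : ∀ t : ℝ, 0 < t →
      t * f t = (t * (c * γ * (t + r) ^ (γ - 1) * B)) /
        (π * (c * (t + r) ^ γ) * Real.sqrt (c * (t + r) ^ γ - c * r ^ γ)) := by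
    intro t ht
    simp only [f, ρ, ρ']
    ring
  -- nonnegativity of t * f t on positives
  have hpos : ∀ t : ℝ, 0 < t → 0 ≤ t * f t := by
    intro t ht
    rw [hrep t ht]
    positivity
  -- split the domain
  rw [show Ioi (0:ℝ) = Ioc 0 r ∪ Ioi r from (Ioc_union_Ioi_eq_Ioi hr.le).symm,
    integrableOn_union]
  constructor
  · -- near 0 : dominate by a constant
    set E := Real.sqrt (c * r ^ (γ - 1)) with hEdef
    have hE : 0 < E := Real.sqrt_pos.mpr (by positivity)
    set K₁ := Real.sqrt r * (γ * B / (π * r * E)) with hK1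
    refine Integrable.mono' (g := fun _ => K₁)
      (integrableOn_const measure_Ioc_lt_top.ne) hm.aestronglyMeasurable ?_
    filter_upwards [ae_restrict_mem measurableSet_Ioc] with t ht
    obtain ⟨ht0, htr⟩ := ht
    set x := t + r with hxdef
    have hx0 : 0 < x := by simp only [hxdef]; linarith
    have hxne : x ≠ 0 := hx0.ne'
    -- key lower bound for the sqrt term
    have hxg : x ^ γ = x ^ (γ - 1) * x := by
      rw [show γ = (γ - 1) + 1 by ring, Real.rpow_add_one hxne]; ring_nf
    have hrg : r ^ γ = r ^ (γ - 1) * r := by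
      rw [show γ = (γ - 1) + 1 by ring, Real.rpow_add_one hr.ne']; ring_nf
    have hmono : r ^ (γ - 1) ≤ x ^ (γ - 1) :=
      Real.rpow_le_rpow hr.le (by simp only [hxdef]; linarith) hγ1
    have hkey : r ^ (γ - 1) * t + r ^ γ ≤ x ^ γ := by
      rw [hxg, hrg]
      nlinarith [Real.rpow_pos_of_pos hr (γ - 1)]
    have hkey' : c * (r ^ (γ - 1) * t) ≤ c * x ^ γ - c * r ^ γ := by nlinarith
    have hden2 : (0:ℝ) < π * (c * x ^ γ) * Real.sqrt (c * (r ^ (γ - 1) * t)) := by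
      have : (0:ℝ) < Real.sqrt (c * (r ^ (γ - 1) * t)) := Real.sqrt_pos.mpr (by positivity)
      positivity
    rw [Real.norm_eq_abs, abs_of_nonneg (hpos t ht0), hrep t ht0]
    calc (t * (c * γ * x ^ (γ - 1) * B)) /
          (π * (c * x ^ γ) * Real.sqrt (c * x ^ γ - c * r ^ γ))
        ≤ (t * (c * γ * x ^ (γ - 1) * B)) /
          (π * (c * x ^ γ) * Real.sqrt (c * (r ^ (γ - 1) * t))) := by
          apply div_le_div_of_nonneg_left (by positivity) hden2
          gcongr
      _ = Real.sqrt t * (γ * B / (π * x * E)) := by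
          have hst : Real.sqrt t * Real.sqrt t = t := Real.mul_self_sqrt ht0.le
          have hsplit : Real.sqrt (c * (r ^ (γ - 1) * t)) = E * Real.sqrt t := by
            rw [show c * (r ^ (γ - 1) * t) = (c * r ^ (γ - 1)) * t by ring,
              Real.sqrt_mul (by positivity) t, hEdef]
          rw [hsplit, hxg]
          have hxg1 : x ^ (γ - 1) ≠ 0 := (Real.rpow_pos_of_pos hx0 _).ne'
          have hstne : Real.sqrt t ≠ 0 := (Real.sqrt_pos.mpr ht0).ne'
          field_simp
          linear_combination (-B) * hst
      _ ≤ Real.sqrt r * (γ * B / (π * r * E)) := by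
          gcongr
          simp only [hxdef]; linarith
  · -- near infinity : dominate by a multiple of t ^ (-(γ/2))
    set E := Real.sqrt (c / 2) with hEdef
    have hE : 0 < E := Real.sqrt_pos.mpr (by positivity)
    set K₂ := γ * B / (π * E) with hK2
    have hint : IntegrableOn (fun t : ℝ => K₂ * t ^ (-(γ/2))) (Ioi r) := by
      exact (integrableOn_Ioi_rpow_of_lt (by linarith) hr).const_mul K₂
    refine Integrable.mono' hint hm.aestronglyMeasurable ?_
    filter_upwards [ae_restrict_mem measurableSet_Ioi] with t ht
    have ht0 : 0 < t := hr.trans ht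
    set x := t + r with hxdef
    have hx0 : 0 < x := by simp only [hxdef]; linarith
    have hxne : x ≠ 0 := hx0.ne'
    have htx : t ≤ x := by simp only [hxdef]; linarith
    have hxg : x ^ γ = x ^ (γ - 1) * x := by
      rw [show γ = (γ - 1) + 1 by ring, Real.rpow_add_one hxne]; ring_nf
    -- key : c * r^γ ≤ c * x^γ / 2
    have htr : r < t := ht
    have h2r : 2 * r ≤ x := by simp only [hxdef]; linarith
    have h4 : (4:ℝ) ≤ (2:ℝ) ^ γ := by
      calc (4:ℝ) = (2:ℝ) ^ (2:ℝ) := by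
            rw [show (2:ℝ) = ((2:ℕ):ℝ) by norm_num, Real.rpow_natCast]; norm_num
        _ ≤ (2:ℝ) ^ γ := Real.rpow_le_rpow_of_exponent_le one_le_two hγ.le
    have hxr : 2 * r ^ γ ≤ x ^ γ := by
      have h1 : (2 * r) ^ γ ≤ x ^ γ := Real.rpow_le_rpow (by positivity) h2r hγ0.le
      rw [Real.mul_rpow (by norm_num) hr.le] at h1
      nlinarith [Real.rpow_pos_of_pos hr γ]
    have hkey' : c / 2 * x ^ γ ≤ c * x ^ γ - c * r ^ γ := by nlinarith
    have hsq : Real.sqrt (c / 2 * x ^ γ) = E * x ^ (γ / 2) := by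
      rw [Real.sqrt_mul (by positivity), hEdef, show γ / 2 = γ * (1/2) by ring,
        Real.rpow_mul hx0.le, ← Real.sqrt_eq_rpow]
    have hden2 : (0:ℝ) < π * (c * x ^ γ) * Real.sqrt (c / 2 * x ^ γ) := by
      have : (0:ℝ) < Real.sqrt (c / 2 * x ^ γ) := Real.sqrt_pos.mpr (by positivity)
      positivity
    have hxg2 : (0:ℝ) < x ^ (γ / 2) := Real.rpow_pos_of_pos hx0 _
    have htg2 : (0:ℝ) < t ^ (γ / 2) := Real.rpow_pos_of_pos ht0 _
    rw [Real.norm_eq_abs, abs_of_nonneg (hpos t ht0), hrep t ht0]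
    calc (t * (c * γ * x ^ (γ - 1) * B)) /
          (π * (c * x ^ γ) * Real.sqrt (c * x ^ γ - c * r ^ γ))
        ≤ (t * (c * γ * x ^ (γ - 1) * B)) /
          (π * (c * x ^ γ) * Real.sqrt (c / 2 * x ^ γ)) := by
          apply div_le_div_of_nonneg_left (by positivity) hden2
          gcongr
      _ = γ * B * t / (π * E * (x * x ^ (γ / 2))) := by
          rw [hsq, hxg]
          have hxg1 : x ^ (γ - 1) ≠ 0 := (Real.rpow_pos_of_pos hx0 _).ne'
          field_simp
      _ ≤ γ * B * t / (π * E * (t * t ^ (γ / 2))) := by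
          gcongr
      _ = K₂ * t ^ (-(γ/2)) := by
          rw [Real.rpow_neg ht0.le, hK2]
          field_simp
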